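/- Let (s,t) be the twist pair of a uv-path P of a uv-straight graph G. Then P[u,s] and P[t,v] are vertex-disjoint if and only if P is not a shortest uv-path of G. -/

import Mathlib

open SimpleGraph

variable {V : Type*}

/-- A walk is monotone if its vertices have pairwise distinct heights. -/
def MonoWalk (G : SimpleGraph V) (u : V) {x y : V} (W : G.Walk x y) : Prop :=
  (W.support.map (fun z => G.dist u z)).Nodup

/-- `P` is a shortest `x`-`y` path of `G`. -/
def IsShortestPath (G : SimpleGraph V) {x y : V} (P : G.Walk x y) : Prop :=
  P.IsPath ∧ P.length = G.dist x y

/-- `P` is an induced path of `G`: a path that equals the subgraph of `G`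
induced by its vertex set. -/
def IsInducedPath (G : SimpleGraph V) {x y : V} (P : G.Walk x y) : Prop :=
  P.IsPath ∧ ∀ a b : V, a ∈ P.support → b ∈ P.support → G.Adj a b → P.toSubgraph.Adj a b

/-- A `uv`-trail of `G`: an induced `uv`-path of `G` that is not a shortest
`uv`-path of `G`. -/
def IsTrailPath (G : SimpleGraph V) (u v : V) (P : G.Walk u v) : Prop :=
  IsInducedPath G P ∧ ¬ IsShortestPath G P

/-- A shortest `uv`-trail of `G`: a `uv`-trail of minimum number of edges. -/
def IsShortestTrail (G : SimpleGraph V) (u v : V) (P : G.Walk u v) : Prop :=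
  IsTrailPath G u v P ∧ ∀ Q : G.Walk u v, IsTrailPath G u v Q → P.length ≤ Q.length

/-- `G` is `uv`-straight: every vertex lies on a shortest `uv`-path of `G`. -/
def Straight (G : SimpleGraph V) (u v : V) : Prop :=
  ∀ x : V, ∃ P : G.Walk u v, IsShortestPath G P ∧ x ∈ P.support

/-- Vertex sets `X` and `Y` are anticomplete in `G`: they are disjoint and there
is no edge of `G` between them. -/
def Anticomplete (G : SimpleGraph V) (X Y : Set V) : Prop :=
  ∀ x ∈ X, ∀ y ∈ Y, x ≠ y ∧ ¬ G.Adj x y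

/-- `x` and `y` are connected in the subgraph of `G` induced by `A`. -/
def ConnIn (G : SimpleGraph V) (A : Set V) (x y : V) : Prop :=
  ∃ W : G.Walk x y, ∀ z ∈ W.support, z ∈ A

/-- The closed neighborhood `N_G[A]` of a vertex set `A`. -/
def closedNbhd (G : SimpleGraph V) (A : Set V) : Set V :=
  {y | y ∈ A ∨ ∃ x ∈ A, G.Adj x y}

/-- `(s, t)` is the twist pair of the `uv`-path `P`: `P[u,s]` is the maximal
monotone prefix of `P` and `P[t,v]` is the maximal monotone suffix of `P`. -/
def IsTwistPair [DecidableEq V] (G : SimpleGraph V) (u v : V) (P : G.Walk u v)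
    (s t : V) : Prop :=
  ∃ (hs : s ∈ P.support) (ht : t ∈ P.support),
    MonoWalk G u (P.takeUntil s hs) ∧ MonoWalk G u (P.dropUntil t ht) ∧
    (∀ (s' : V) (hs' : s' ∈ P.support), MonoWalk G u (P.takeUntil s' hs') →
      (P.takeUntil s' hs').length ≤ (P.takeUntil s hs).length) ∧
    (∀ (t' : V) (ht' : t' ∈ P.support), MonoWalk G u (P.dropUntil t' ht') →
      (P.dropUntil t' ht').length ≤ (P.dropUntil t ht).length)

/-- `(W1, W2)` is a pair of wings for the quadruple `(a, b, c, d)` in `G`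
(with respect to heights measured from `u`): `W1` is a monotone `c`-`a*`-path
containing `a`, `W2` is a monotone `b`-`d*`-path containing `d`,
`h(a*) + 1 = h(a) = h(b) ≤ h(c) = h(d) = h(d*) - 1`, `W1 - c` is anticomplete
to `W2`, and `W1` is anticomplete to `W2 - b`. -/
def IsWingPair (G : SimpleGraph V) (u : V) (a b c d : V) {astar dstar : V}
    (W1 : G.Walk c astar) (W2 : G.Walk b dstar) : Prop :=
  W1.IsPath ∧ W2.IsPath ∧ MonoWalk G u W1 ∧ MonoWalk G u W2 ∧
  a ∈ W1.support ∧ d ∈ W2.support ∧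
  G.dist u astar + 1 = G.dist u a ∧ G.dist u a = G.dist u b ∧
  G.dist u b ≤ G.dist u c ∧ G.dist u c = G.dist u d ∧
  G.dist u d + 1 = G.dist u dstar ∧
  Anticomplete G {x | x ∈ W1.support ∧ x ≠ c} {x | x ∈ W2.support} ∧
  Anticomplete G {x | x ∈ W1.support} {x | x ∈ W2.support ∧ x ≠ b}

/-- The quadruple `(a, b, c, d)` is winged in `G`. -/
def Winged (G : SimpleGraph V) (u : V) (a b c d : V) : Prop :=
  ∃ (astar dstar : V) (W1 : G.Walk c astar) (W2 : G.Walk b dstar),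
    IsWingPair G u a b c d W1 W2

/-- The quadruple `(a, b, c, d)` admits a pair of wings `(W1, W2)` in `G` with
`W1` anticomplete to `W2`. -/
def WingedAnti (G : SimpleGraph V) (u : V) (a b c d : V) : Prop :=
  ∃ (astar dstar : V) (W1 : G.Walk c astar) (W2 : G.Walk b dstar),
    IsWingPair G u a b c d W1 W2 ∧
    Anticomplete G {x | x ∈ W1.support} {x | x ∈ W2.support}

/-- For a `uv`-trail `P` of a `uv`-straight graph `G` with twist pair `(s, t)`,
a monotone `uc`-path `S` of `G` with `h(c) = h(s)` is a sidetrack for `P` if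
(S1) `G` contains a monotone `tv`-path `T` with `S - c` anticomplete to `T` and
`S` anticomplete to `T - t`, and (S2) `S` contains the vertex `a` of `P[u,s]`
with `h(a) = h(t)`. -/
def IsSidetrack [DecidableEq V] (G : SimpleGraph V) (u v : V) (P : G.Walk u v)
    (s t : V) {c : V} (S : G.Walk u c) : Prop :=
  S.IsPath ∧ MonoWalk G u S ∧ G.dist u c = G.dist u s ∧
  (∃ (T : G.Walk t v), T.IsPath ∧ MonoWalk G u T ∧
    Anticomplete G {x | x ∈ S.support ∧ x ≠ c} {x | x ∈ T.support} ∧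
    Anticomplete G {x | x ∈ S.support} {x | x ∈ T.support ∧ x ≠ t}) ∧
  (∀ (hs : s ∈ P.support) (a : V),
    a ∈ (P.takeUntil s hs).support → G.dist u a = G.dist u t → a ∈ S.support)

lemma walk_len_zero {G : SimpleGraph V} {a b : V} (w : G.Walk a b) (h : w.length = 0) :
    a = b := by
  cases w with
  | nil => rfl
  | cons _ _ => simp at h

lemma takeUntil_first {G : SimpleGraph V} [DecidableEq V] {a b : V} (P : G.Walk a b)
    (h : a ∈ P.support) : P.takeUntil a h = Walk.nil := by
  cases P with
  | nil => rfl
  | cons r p => simp [Walk.takeUntil]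

lemma takeUntil_cons {G : SimpleGraph V} [DecidableEq V] {a c b x : V} (r : G.Adj a c)
    (p : G.Walk c b) (hx : x ∈ p.support) (hne : a ≠ x) (h' : x ∈ (Walk.cons r p).support) :
    (Walk.cons r p).takeUntil x h' = Walk.cons r (p.takeUntil x hx) := by
  simp [Walk.takeUntil, hne]

lemma monoAux {G : SimpleGraph V} :
    ∀ {u c : V} (R : G.Walk c u), (R.support.map (fun z => G.dist u z)).Nodup →
      R.length = G.dist u c ∧ ∀ k ≤ R.length, ∃ z ∈ R.support, G.dist u z = k := by
  intro u c R
  induction R with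
  | @nil a =>
    intro _
    refine ⟨by simp [SimpleGraph.dist_self], ?_⟩
    intro k hk
    simp only [Walk.length_nil, Nat.le_zero] at hk
    exact ⟨a, by simp, by simp [hk, SimpleGraph.dist_self]⟩
  | @cons c c2 u radj R' ih =>
    intro hnd
    rw [Walk.support_cons, List.map_cons, List.nodup_cons] at hnd
    obtain ⟨hhead, hnd'⟩ := hnd
    obtain ⟨ihlen, ihcov⟩ := ih hnd'
    have hle : G.dist u c ≤ R'.length + 1 := by
      have := G.dist_le (Walk.cons radj R').reverse
      rwa [Walk.length_reverse, Walk.length_cons] at this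
    have hgt : R'.length < G.dist u c := by
      by_contra hle2
      push_neg at hle2
      obtain ⟨z, hz, hzd⟩ := ihcov (G.dist u c) hle2
      refine hhead ?_
      rw [← hzd]
      exact List.mem_map_of_mem hz
    have hdc : G.dist u c = R'.length + 1 := by omega
    refine ⟨by simp [hdc], ?_⟩
    intro k hk
    rw [Walk.length_cons] at hk
    rcases Nat.lt_or_ge k (R'.length + 1) with h | h
    · obtain ⟨z, hz, hzd⟩ := ihcov k (by omega)
      exact ⟨z, by simp [hz], hzd⟩
    · exact ⟨c, by simp, by omega⟩

lemma mono_length {G : SimpleGraph V} {u c : V} (W : G.Walk u c) (h : MonoWalk G u W) :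
    W.length = G.dist u c := by
  have h' : (W.reverse.support.map (fun z => G.dist u z)).Nodup := by
    rw [Walk.support_reverse, List.map_reverse, List.nodup_reverse]; exact h
  have := (monoAux W.reverse h').1
  rwa [Walk.length_reverse] at this

lemma straight_dist {G : SimpleGraph V} {u v : V} (hst : Straight G u v) [DecidableEq V]
    (x : V) : G.dist u x + G.dist x v = G.dist u v := by
  obtain ⟨Q, ⟨hQp, hQl⟩, hx⟩ := hst x
  have hlen : (Q.takeUntil x hx).length + (Q.dropUntil x hx).length = Q.length := by
    conv_rhs => rw [← Q.take_spec hx]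
    rw [Walk.length_append]
  have h1 : G.dist u x ≤ (Q.takeUntil x hx).length := G.dist_le _
  have h2 : G.dist x v ≤ (Q.dropUntil x hx).length := G.dist_le _
  have h3 : G.dist u v ≤ G.dist u x + G.dist x v := by
    obtain ⟨p, hp⟩ := SimpleGraph.Reachable.exists_walk_length_eq_dist ⟨Q.takeUntil x hx⟩
    obtain ⟨q, hq⟩ := SimpleGraph.Reachable.exists_walk_length_eq_dist ⟨Q.dropUntil x hx⟩
    have := G.dist_le (p.append q)
    rwa [Walk.length_append, hp, hq] at this
  omega

lemma mono_takeUntil {G : SimpleGraph V} [DecidableEq V] {u a b : V} (P : G.Walk a b)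
    (h : MonoWalk G u P) (x : V) (hx : x ∈ P.support) : MonoWalk G u (P.takeUntil x hx) := by
  unfold MonoWalk at *
  rw [← P.take_spec hx, Walk.support_append, List.map_append] at h
  exact h.of_append_left

lemma mem_take_drop_eq {G : SimpleGraph V} [DecidableEq V] {a b : V} {P : G.Walk a b}
    (hP : P.IsPath) {x s : V} (hs : s ∈ P.support)
    (h1 : x ∈ (P.takeUntil s hs).support) (h2 : x ∈ (P.dropUntil s hs).support) : x = s := by
  by_contra hne
  have hnd := hP.support_nodup
  rw [← P.take_spec hs, Walk.support_append] at hnd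
  have h2' : x ∈ (P.dropUntil s hs).support.tail := by
    have e := (P.dropUntil s hs).support_eq_cons
    rw [e] at h2
    rcases List.mem_cons.mp h2 with h | h
    · exact absurd h hne
    · exact h
  exact List.disjoint_of_nodup_append hnd h1 h2'

lemma take_order {G : SimpleGraph V} [DecidableEq V] {a b : V} (P : G.Walk a b) :
    ∀ (x y : V) (hx : x ∈ P.support) (hy : y ∈ P.support),
      y ∈ (P.takeUntil x hx).support ∨ x ∈ (P.takeUntil y hy).support := by
  induction P with
  | @nil a =>
    intro x y hx hy
    rw [Walk.mem_support_nil_iff] at hx hy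
    subst hx; subst hy
    exact Or.inl (Walk.start_mem_support _)
  | @cons a c b r p ih =>
    intro x y hx hy
    by_cases hya : y = a
    · subst hya
      exact Or.inl (Walk.start_mem_support _)
    · by_cases hxa : x = a
      · subst hxa
        exact Or.inr (Walk.start_mem_support _)
      · have hx' : x ∈ p.support := by
          rw [Walk.support_cons] at hx
          rcases List.mem_cons.mp hx with h | h
          · exact absurd h hxa
          · exact h
        have hy' : y ∈ p.support := by
          rw [Walk.support_cons] at hy
          rcases List.mem_cons.mp hy with h | h
          · exact absurd h hya
          · exact h
        rw [takeUntil_cons r p hx' (fun h => hxa h.symm) hx,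
          takeUntil_cons r p hy' (fun h => hya h.symm) hy]
        rw [Walk.support_cons, Walk.support_cons]
        rcases ih x y hx' hy' with h | h
        · exact Or.inl (List.mem_cons_of_mem _ h)
        · exact Or.inr (List.mem_cons_of_mem _ h)

lemma takeUntil_takeUntil' {G : SimpleGraph V} [DecidableEq V] {a b : V} (P : G.Walk a b) :
    ∀ (x : V) (hx : x ∈ P.support) (y : V) (hy : y ∈ (P.takeUntil x hx).support)
      (hy2 : y ∈ P.support),
      (P.takeUntil x hx).takeUntil y hy = P.takeUntil y hy2 := by
  induction P with
  | @nil a =>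
    intro x hx y hy hy2
    rw [Walk.mem_support_nil_iff] at hx
    subst hx
    rw [Walk.mem_support_nil_iff] at hy2
    subst hy2
    rw [takeUntil_first, takeUntil_first]
  | @cons a c b r p ih =>
    intro x hx y hy hy2
    by_cases hya : y = a
    · subst hya
      rw [takeUntil_first, takeUntil_first]
    · by_cases hxa : x = a
      · subst hxa
        exfalso
        have e := takeUntil_first (Walk.cons r p) hx
        rw [e] at hy
        rw [Walk.mem_support_nil_iff] at hy
        exact hya hy
      · have hx' : x ∈ p.support := by
          rw [Walk.support_cons] at hx
          rcases List.mem_cons.mp hx with h | h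
          · exact absurd h hxa
          · exact h
        have e1 : (Walk.cons r p).takeUntil x hx = Walk.cons r (p.takeUntil x hx') :=
          takeUntil_cons r p hx' (fun h => hxa h.symm) hx
        have hy1 : y ∈ (p.takeUntil x hx').support := by
          have := hy
          rw [e1, Walk.support_cons] at this
          rcases List.mem_cons.mp this with h | h
          · exact absurd h hya
          · exact h
        have hy2' : y ∈ p.support := p.support_takeUntil_subset hx' hy1
        have e2 : (Walk.cons r (p.takeUntil x hx')).takeUntil y
              (by rw [← e1]; exact hy)
            = Walk.cons r ((p.takeUntil x hx').takeUntil y hy1) :=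
          takeUntil_cons r _ hy1 (fun h => hya h.symm) _
        have e3 : (Walk.cons r p).takeUntil y hy2 = Walk.cons r (p.takeUntil y hy2') :=
          takeUntil_cons r p hy2' (fun h => hya h.symm) hy2
        simp only [e1, e2, e3, ih x hx' y hy1 hy2']

lemma shortest_prefix {G : SimpleGraph V} [DecidableEq V] {a b : V} (W : G.Walk a b)
    (hl : W.length = G.dist a b) {z : V} (hz : z ∈ W.support) :
    (W.takeUntil z hz).length = G.dist a z ∧ (W.dropUntil z hz).length = G.dist z b := by
  have hlen : (W.takeUntil z hz).length + (W.dropUntil z hz).length = W.length := by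
    conv_rhs => rw [← W.take_spec hz]
    rw [Walk.length_append]
  have h1 : G.dist a z ≤ (W.takeUntil z hz).length := G.dist_le _
  have h2 : G.dist z b ≤ (W.dropUntil z hz).length := G.dist_le _
  have h3 : G.dist a b ≤ G.dist a z + G.dist z b := by
    obtain ⟨p, hp⟩ := SimpleGraph.Reachable.exists_walk_length_eq_dist ⟨W.takeUntil z hz⟩
    obtain ⟨q, hq⟩ := SimpleGraph.Reachable.exists_walk_length_eq_dist ⟨W.dropUntil z hz⟩
    have := G.dist_le (p.append q)
    rwa [Walk.length_append, hp, hq] at this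
  omega

lemma shortest_mono {G : SimpleGraph V} [DecidableEq V] {u c : V} (P : G.Walk u c)
    (hp : P.IsPath) (hl : P.length = G.dist u c) : MonoWalk G u P := by
  have key : ∀ (x y : V) (hx : x ∈ P.support), G.dist u x = G.dist u y →
      y ∈ (P.takeUntil x hx).support → x = y := by
    intro x y hx hxy h
    have hQl : (P.takeUntil x hx).length = G.dist u x := (shortest_prefix P hl hx).1
    have h2 := (shortest_prefix (P.takeUntil x hx) (by rw [hQl]) h).1
    have hspec : ((P.takeUntil x hx).takeUntil y h).length
        + ((P.takeUntil x hx).dropUntil y h).length = (P.takeUntil x hx).length := by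
      conv_rhs => rw [← (P.takeUntil x hx).take_spec h]
      rw [Walk.length_append]
    have hz : ((P.takeUntil x hx).dropUntil y h).length = 0 := by omega
    exact (walk_len_zero _ hz).symm
  unfold MonoWalk
  refine List.Nodup.map_on ?_ hp.support_nodup
  intro x hx y hy hxy
  rcases take_order P x y hx hy with h | h
  · exact key x y hx hxy h
  · exact (key y x hy hxy.symm h).symm

/-- If `(s, t)` is the twist pair of a `uv`-path `P` of a
`uv`-straight graph `G`, then `P[u,s]` and `P[t,v]` are vertex-disjoint if and
only if `P` is not a shortest `uv`-path of `G`. -/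
theorem statement4 [Fintype V] [DecidableEq V] (G : SimpleGraph V) (u v : V)
    (hstraight : Straight G u v)
    (P : G.Walk u v) (hPpath : P.IsPath)
    (s t : V) (htwist : IsTwistPair G u v P s t)
    (hs : s ∈ P.support) (ht : t ∈ P.support) :
    (P.takeUntil s hs).support.Disjoint (P.dropUntil t ht).support ↔
      ¬ IsShortestPath G P := by
  obtain ⟨hs', ht', hmts, hmtd, hmaxs, hmaxt⟩ := htwist
  constructor
  · intro hdisj hshort
    obtain ⟨hP2, hPlen⟩ := hshort
    have hmono : MonoWalk G u P := shortest_mono P hP2 hPlen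
    have hv : v ∈ P.support := P.end_mem_support
    have h1 : (P.takeUntil v hv).length = G.dist u v :=
      mono_length _ (mono_takeUntil P hmono v hv)
    have h2 := hmaxs v hv (mono_takeUntil P hmono v hv)
    have h3 : (P.takeUntil s hs').length + (P.dropUntil s hs').length = P.length := by
      conv_rhs => rw [← P.take_spec hs']
      rw [Walk.length_append]
    have h4 : (P.dropUntil s hs').length = 0 := by omega
    have hsv : s = v := walk_len_zero _ h4
    subst hsv
    exact hdisj (Walk.end_mem_support _) (Walk.end_mem_support _)
  · intro hnshort
    by_contra hndisj
    apply hnshort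
    obtain ⟨x, hx1, hx2⟩ :
        ∃ x, x ∈ (P.takeUntil s hs).support ∧ x ∈ (P.dropUntil t ht).support := by
      by_contra h
      push_neg at h
      exact hndisj (fun a ha hb => h a ha hb)
    have htts : t ∈ (P.takeUntil s hs).support := by
      rcases take_order P t s ht hs with h | h
      · have e := takeUntil_takeUntil' P t ht s h hs
        have hx1' : x ∈ ((P.takeUntil t ht).takeUntil s h).support := by
          rw [e]; exact hx1
        have hx1'' : x ∈ (P.takeUntil t ht).support :=
          (P.takeUntil t ht).support_takeUntil_subset h hx1'
        have hxt : x = t := mem_take_drop_eq hPpath ht hx1'' hx2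
        rw [← hxt]; exact hx1
      · exact h
    have e2 := takeUntil_takeUntil' P s hs t htts ht
    have hmt : MonoWalk G u (P.takeUntil t ht) := by
      rw [← e2]
      exact mono_takeUntil _ hmts t htts
    have hlen_t : (P.takeUntil t ht).length = G.dist u t := mono_length _ hmt
    have hmtd' : MonoWalk G v ((P.dropUntil t ht).reverse) := by
      unfold MonoWalk at hmtd ⊢
      rw [Walk.support_reverse, List.map_reverse, List.nodup_reverse]
      have hp : (P.dropUntil t ht).support.Pairwise
          (fun a b => G.dist u a ≠ G.dist u b) := List.pairwise_map.mp hmtd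
      refine List.pairwise_map.mpr (hp.imp ?_)
      intro a b hne heq
      have ha := straight_dist hstraight a
      have hb := straight_dist hstraight b
      have hca : G.dist v a = G.dist a v := SimpleGraph.dist_comm
      have hcb : G.dist v b = G.dist b v := SimpleGraph.dist_comm
      omega
    have hlen_d : (P.dropUntil t ht).length = G.dist v t := by
      have := mono_length _ hmtd'
      rwa [Walk.length_reverse] at this
    refine ⟨hPpath, ?_⟩
    have hspec : (P.takeUntil t ht).length + (P.dropUntil t ht).length = P.length := by
      conv_rhs => rw [← P.take_spec ht]
      rw [Walk.length_append]
    have hd := straight_dist hstraight t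
    have hct : G.dist v t = G.dist t v := SimpleGraph.dist_comm
    omega
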